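/- On a path, in any sequence of rational swaps under strict preferences, if objects o_a and o_b with a < b both end strictly to the right of their initial positions (a' > a and b' > b) and the interval Q = [a, a'] ∩ [b, b'] is nonempty, then every agent q in Q strictly prefers o_a to o_b. -/

import Mathlib

/-- An assignment maps agents to objects bijectively (agents and objects are both `Fin n`;
object `o_i` is identified with index `i`, agent `i` initially holds `o_i`). -/
abbrev Assignment (n : ℕ) := Equiv.Perm (Fin n)

/-- `u j o` is agent `j`'s utility for object `o`; strict linear preferences mean each `u j`
is injective, and `o ≻_j o'` iff `u j o > u j o'`. -/
def StrictPref {n : ℕ} (u : Fin n → Fin n → ℕ) : Prop := ∀ j, Function.Injective (u j)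

/-- A rational swap under strict preferences: two adjacent agents exchange objects, each
strictly preferring the object received. -/
def SwapStep {n : ℕ} (adj : Fin n → Fin n → Prop) (u : Fin n → Fin n → ℕ)
    (σ σ' : Assignment n) : Prop :=
  ∃ a b : Fin n, adj a b ∧ u a (σ b) > u a (σ a) ∧ u b (σ a) > u b (σ b) ∧
    σ' = σ * Equiv.swap a b

/-- `σseq 0, σseq 1, …, σseq t` is a sequence of swaps. -/
def SwapSeq {n : ℕ} (adj : Fin n → Fin n → Prop) (u : Fin n → Fin n → ℕ)
    (σseq : ℕ → Assignment n) (t : ℕ) : Prop :=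
  ∀ m < t, SwapStep adj u (σseq m) (σseq (m + 1))

/-- Adjacency of the path `0 – 1 – ⋯ – (n-1)`. -/
def pathAdj {n : ℕ} (i j : Fin n) : Prop := i.val + 1 = j.val ∨ j.val + 1 = i.val

section Aux

variable {n : ℕ} {u : Fin n → Fin n → ℕ} {t : ℕ} {σseq : ℕ → Assignment n}

lemma hold_step (hseq : SwapSeq pathAdj u σseq t) (z : Fin n) (k : ℕ) (hk : k < t) :
    u z (σseq k z) ≤ u z (σseq (k + 1) z) := by
  obtain ⟨x, y, _, hx, hy, heq⟩ := hseq k hk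
  rw [heq, Equiv.Perm.mul_apply]
  by_cases hzx : z = x
  · subst hzx; rw [Equiv.swap_apply_left]; exact le_of_lt hx
  by_cases hzy : z = y
  · subst hzy; rw [Equiv.swap_apply_right]; exact le_of_lt hy
  rw [Equiv.swap_apply_of_ne_of_ne hzx hzy]

lemma hold_mono (hseq : SwapSeq pathAdj u σseq t) (z : Fin n) :
    ∀ m m', m ≤ m' → m' ≤ t → u z (σseq m z) ≤ u z (σseq m' z) := by
  intro m m' h1
  induction m' with
  | zero =>
    intro _
    have : m = 0 := by omega
    subst this; rfl
  | succ k ih =>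
    intro h2
    rcases Nat.lt_or_ge m (k + 1) with h | h
    · exact le_trans (ih (Nat.lt_succ_iff.mp h) (by omega)) (hold_step hseq z k (by omega))
    · have : m = k + 1 := by omega
      subst this; rfl

lemma hold_strict (hu : StrictPref u) (hseq : SwapSeq pathAdj u σseq t) (z : Fin n)
    {m m' : ℕ} (hm : m < m') (hm' : m' ≤ t) {o o' : Fin n}
    (ho : σseq m z = o) (ho' : σseq m' z = o') (hne : o ≠ o') :
    u z o < u z o' := by
  have h := hold_mono hseq z m m' (le_of_lt hm) hm'
  rw [ho, ho'] at h
  exact lt_of_le_of_ne h (fun h' => hne (hu z h'))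

lemma pos_step (hseq : SwapSeq pathAdj u σseq t) (o : Fin n) (m : ℕ) (hm : m < t) :
    ((σseq (m + 1))⁻¹ o).val = ((σseq m)⁻¹ o).val ∨
    ((σseq (m + 1))⁻¹ o).val = ((σseq m)⁻¹ o).val + 1 ∨
    ((σseq (m + 1))⁻¹ o).val + 1 = ((σseq m)⁻¹ o).val := by
  obtain ⟨x, y, hadj, _, _, heq⟩ := hseq m hm
  have hkey : (σseq (m + 1))⁻¹ o = Equiv.swap x y ((σseq m)⁻¹ o) := by
    rw [heq, mul_inv_rev, Equiv.swap_inv, Equiv.Perm.mul_apply]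
  rw [hkey]
  by_cases hx : (σseq m)⁻¹ o = x
  · rw [hx, Equiv.swap_apply_left]
    rcases hadj with h | h
    · right; left; omega
    · right; right; omega
  by_cases hy : (σseq m)⁻¹ o = y
  · rw [hy, Equiv.swap_apply_right]
    rcases hadj with h | h
    · right; right; omega
    · right; left; omega
  · rw [Equiv.swap_apply_of_ne_of_ne hx hy]; left; rfl

lemma reach (hseq : SwapSeq pathAdj u σseq t) (o : Fin n) (q : ℕ)
    (h0 : ((σseq 0)⁻¹ o).val < q) (ht : q ≤ ((σseq t)⁻¹ o).val) :
    ∃ s, 0 < s ∧ s ≤ t ∧ ((σseq s)⁻¹ o).val = q ∧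
      ((σseq (s - 1))⁻¹ o).val + 1 = q := by
  classical
  have hex : ∃ m, q ≤ ((σseq m)⁻¹ o).val := ⟨t, ht⟩
  set s := Nat.find hex with hs
  have hspec : q ≤ ((σseq s)⁻¹ o).val := Nat.find_spec hex
  have hst : s ≤ t := Nat.find_min' hex ht
  have hlt : ∀ m < s, ((σseq m)⁻¹ o).val < q := by
    intro m hm
    have := Nat.find_min hex hm
    omega
  have hpos : 0 < s := by
    rcases Nat.eq_zero_or_pos s with h | h
    · rw [h] at hspec; omega
    · exact h
  have hprev : ((σseq (s - 1))⁻¹ o).val < q := hlt (s - 1) (by omega)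
  have hstep := pos_step hseq o (s - 1) (by omega)
  rw [Nat.sub_add_cancel hpos] at hstep
  refine ⟨s, hpos, hst, by omega, by omega⟩

end Aux

/-- on a path, if `a < b`, both objects end strictly to the right of their
initial positions (`a' > a`, `b' > b`), and `Q = [a,a'] ∩ [b,b']` is nonempty, then every
agent `q ∈ Q` strictly prefers `o_a` to `o_b`. -/
theorem intersect_both_right {n : ℕ}
    (u : Fin n → Fin n → ℕ) (hu : StrictPref u)
    (t : ℕ) (σseq : ℕ → Assignment n) (h0 : σseq 0 = 1)
    (hseq : SwapSeq pathAdj u σseq t)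
    (a b : Fin n) (hab : a.val < b.val)
    (ha : a.val < (((σseq t)⁻¹) a).val) (hb : b.val < (((σseq t)⁻¹) b).val)
    (hQ : (Set.Icc a.val (((σseq t)⁻¹) a).val ∩
            Set.Icc b.val (((σseq t)⁻¹) b).val).Nonempty) :
    ∀ q : Fin n,
      q.val ∈ Set.Icc a.val (((σseq t)⁻¹) a).val ∩ Set.Icc b.val (((σseq t)⁻¹) b).val →
      u q a > u q b := by
  have hp0 : ∀ o : Fin n, (σseq 0)⁻¹ o = o := by
    intro o; rw [h0]; rfl
  have hne : a ≠ b := fun h => by simp [h] at hab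
  have key : ∀ qv : ℕ, ∀ hqn : qv < n, b.val ≤ qv →
      qv ≤ (((σseq t)⁻¹) a).val → qv ≤ (((σseq t)⁻¹) b).val →
      u ⟨qv, hqn⟩ a > u ⟨qv, hqn⟩ b := by
    intro qv
    induction qv using Nat.strong_induction_on with
    | _ qv ih =>
      intro hqn hbq hqa hqb
      have haq : a.val < qv := lt_of_lt_of_le hab hbq
      obtain ⟨s1, hs1pos, hs1t, hs1q, hs1prev⟩ :=
        reach (u := u) hseq a qv (by rw [hp0]; exact haq) hqa
      have hold_a : σseq s1 ⟨qv, hqn⟩ = a := by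
        have h1 : (σseq s1)⁻¹ a = ⟨qv, hqn⟩ := Fin.ext hs1q
        rw [← h1]; exact (Equiv.eq_symm_apply _).mp rfl
      rcases eq_or_lt_of_le hbq with hqb' | hqb'
      · -- base case : qv = b.val, agent holds o_b at time 0
        have hold_b0 : σseq 0 ⟨qv, hqn⟩ = b := by
          have h1 : (σseq 0)⁻¹ b = ⟨qv, hqn⟩ := by
            rw [hp0]; exact Fin.ext hqb'
          rw [← h1]; exact (Equiv.eq_symm_apply _).mp rfl
        exact hold_strict hu hseq _ hs1pos hs1t hold_b0 hold_a (Ne.symm hne)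
      · -- inductive case : b.val < qv
        by_contra hcon
        obtain ⟨s2, hs2pos, hs2t, hs2q, hs2prev⟩ :=
          reach (u := u) hseq b qv (by rw [hp0]; exact hqb') hqb
        have hold_b : σseq s2 ⟨qv, hqn⟩ = b := by
          have h1 : (σseq s2)⁻¹ b = ⟨qv, hqn⟩ := Fin.ext hs2q
          rw [← h1]; exact (Equiv.eq_symm_apply _).mp rfl
        have hs12ne : s1 ≠ s2 := by
          intro h
          apply hne
          rw [← hold_a, h, hold_b]
        have hs12 : s1 < s2 := by
          rcases lt_or_gt_of_ne hs12ne with h | h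
          · exact h
          · exact absurd (hold_strict hu hseq _ h hs1t hold_b hold_a (Ne.symm hne)) hcon
        -- agent qv - 1
        have hq1n : qv - 1 < n := by omega
        have hprev_a : σseq (s1 - 1) ⟨qv - 1, hq1n⟩ = a := by
          have h1 : (σseq (s1 - 1))⁻¹ a = ⟨qv - 1, hq1n⟩ := Fin.ext (show _ = qv - 1 by omega)
          rw [← h1]; exact (Equiv.eq_symm_apply _).mp rfl
        have hprev_b : σseq (s2 - 1) ⟨qv - 1, hq1n⟩ = b := by
          have h1 : (σseq (s2 - 1))⁻¹ b = ⟨qv - 1, hq1n⟩ := Fin.ext (show _ = qv - 1 by omega)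
          rw [← h1]; exact (Equiv.eq_symm_apply _).mp rfl
        have hlt : u ⟨qv - 1, hq1n⟩ a < u ⟨qv - 1, hq1n⟩ b :=
          hold_strict hu hseq _ (by omega) (by omega) hprev_a hprev_b hne
        have hgt := ih (qv - 1) (by omega) hq1n (by omega) (by omega) (by omega)
        omega
  intro q hq
  obtain ⟨⟨hqa1, hqa2⟩, hqb1, hqb2⟩ := hq
  have := key q.val q.isLt hqb1 hqa2 hqb2
  simpa using this
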